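/- Suppose 1 ∈ U and U contains elements u, v, w such that 1, u, v, w are pairwise non-±-equal. Then R(U) equals the ℤ[P]-submodule of ℂ generated by the elementary monomials; that is, R(U) is exactly the set of finite sums Σᵢ cᵢ·zᵢ with each cᵢ ∈ ℤ[P] and each zᵢ an elementary monomial. -/

import Mathlib

open Complex

/-- The bracket `[x,y] = x * conj y - y * conj x`. -/
noncomputable def brkt (x y : ℂ) : ℂ := x * (starRingEnd ℂ) y - y * (starRingEnd ℂ) x

/-- `lineInt α β p q` is the intersection point `I_{α,β}(p,q)` of the line through `p`
with direction `α` and the line through `q` with direction `β` (for unit `α ≠ ±β`),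
given by the formula of Buhler et al. -/
noncomputable def lineInt (α β p q : ℂ) : ℂ :=
  brkt α p / brkt α β * β + brkt β q / brkt β α * α

/-- The sets `S n` in the inductive construction. -/
def stepSet (U : Set ℂ) : ℕ → Set ℂ
  | 0 => {0, 1}
  | n + 1 => {z | ∃ α ∈ U, ∃ β ∈ U, α ≠ β ∧ α ≠ -β ∧
      ∃ p ∈ stepSet U n, ∃ q ∈ stepSet U n, z = lineInt α β p q}

/-- `RU U = ⋃ n, S n`. -/
def RU (U : Set ℂ) : Set ℂ := ⋃ n, stepSet U n

/-- Elementary monomials of `U`. -/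
def IsElem (U : Set ℂ) (z : ℂ) : Prop :=
  ∃ α ∈ U, ∃ β ∈ U, α ≠ β ∧ α ≠ -β ∧ z = lineInt α β 0 1

/-- Monomials of `U`, defined inductively. -/
inductive IsMonomial (U : Set ℂ) : ℂ → Prop
  | elementary (α β : ℂ) (hα : α ∈ U) (hβ : β ∈ U) (h1 : α ≠ β) (h2 : α ≠ -β) :
      IsMonomial U (lineInt α β 0 1)
  | step (α β m : ℂ) (hα : α ∈ U) (hβ : β ∈ U) (h1 : α ≠ β) (h2 : α ≠ -β)
      (hm : IsMonomial U m) : IsMonomial U (lineInt α β 0 m)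

/-- `P`: the real numbers arising as length-two monomials `I_{γ,δ}(0,z)` on the real axis. -/
def projSet (U : Set ℂ) : Set ℝ :=
  {r | ∃ γ ∈ U, ∃ δ ∈ U, γ ≠ δ ∧ γ ≠ -δ ∧ ∃ z, IsElem U z ∧ (r : ℂ) = lineInt γ δ 0 z}

/-- `m` is a `ℤ[P]`-linear combination of elementary monomials of `U`. -/
def IsZPComb (U : Set ℂ) (m : ℂ) : Prop :=
  ∃ (n : ℕ) (c : Fin n → ℝ) (z : Fin n → ℂ),
    (∀ i, c i ∈ Subring.closure (projSet U)) ∧ (∀ i, IsElem U (z i)) ∧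
    m = ∑ i, (c i : ℂ) * z i

lemma conj_eq_inv {z : ℂ} (hz : ‖z‖ = 1) : (starRingEnd ℂ) z = z⁻¹ := by
  have h : Complex.normSq z = 1 := by simp [← Complex.sq_norm, hz]
  rw [Complex.inv_def, h]; simp

lemma unit_ne_zero {z : ℂ} (hz : ‖z‖ = 1) : z ≠ 0 := by
  intro h; rw [h] at hz; simp at hz

lemma brkt_swap (x y : ℂ) : brkt y x = -brkt x y := by simp only [brkt]; ring

lemma brkt_zero_right (x : ℂ) : brkt x 0 = 0 := by simp [brkt]

lemma brkt_neg_left (x y : ℂ) : brkt (-x) y = -brkt x y := by simp only [brkt, map_neg]; ring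

lemma brkt_neg_right (x y : ℂ) : brkt x (-y) = -brkt x y := by simp only [brkt, map_neg]; ring

lemma brkt_conj (x y : ℂ) : (starRingEnd ℂ) (brkt x y) = -brkt x y := by
  simp only [brkt, map_sub, map_mul, Complex.conj_conj]; ring

lemma brkt_add_right (x a b : ℂ) : brkt x (a + b) = brkt x a + brkt x b := by
  simp only [brkt, map_add]; ring

lemma brkt_real_right (x a : ℂ) (r : ℝ) : brkt x ((r:ℂ) * a) = (r:ℂ) * brkt x a := by
  simp only [brkt, map_mul, Complex.conj_ofReal]; ring

lemma den_ne {a b : ℂ} (ha : a ≠ 0) (hb : b ≠ 0) (h1 : a ≠ b) (h2 : a ≠ -b) :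
    a * b⁻¹ - b * a⁻¹ ≠ 0 := by
  have h : a * b⁻¹ - b * a⁻¹ = (a - b) * (a + b) * (a⁻¹ * b⁻¹) := by field_simp; ring
  rw [h]
  exact mul_ne_zero (mul_ne_zero (sub_ne_zero.mpr h1)
    (fun hh => h2 (eq_neg_of_add_eq_zero_left hh)))
    (mul_ne_zero (inv_ne_zero ha) (inv_ne_zero hb))

lemma brkt_ne_zero {x y : ℂ} (hx : ‖x‖ = 1) (hy : ‖y‖ = 1)
    (h1 : x ≠ y) (h2 : x ≠ -y) : brkt x y ≠ 0 := by
  rw [brkt, conj_eq_inv hx, conj_eq_inv hy]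
  exact den_ne (unit_ne_zero hx) (unit_ne_zero hy) h1 h2

lemma lineInt_zero_eq (γ δ q : ℂ) : lineInt γ δ 0 q = brkt δ q / brkt δ γ * γ := by
  rw [lineInt, brkt_zero_right, zero_div, zero_mul, zero_add]

lemma lineInt_zero_zero (γ δ : ℂ) : lineInt γ δ 0 0 = 0 := by
  rw [lineInt_zero_eq, brkt_zero_right, zero_div, zero_mul]

lemma lineInt_self {α β : ℂ} (h : brkt α β ≠ 0) (p : ℂ) : lineInt α β p p = p := by
  have key : brkt α p * β - brkt β p * α = p * brkt α β := by simp only [brkt]; ring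
  rw [lineInt, brkt_swap α β, div_neg, neg_mul, ← sub_eq_add_neg,
    div_mul_eq_mul_div, div_mul_eq_mul_div, div_sub_div_same, key,
    mul_div_assoc, div_self h, mul_one]

lemma lineInt_decomp (α β p q : ℂ) : lineInt α β p q = lineInt β α 0 p + lineInt α β 0 q := by
  rw [lineInt_zero_eq, lineInt_zero_eq, lineInt]

lemma lineInt_zero_add (γ δ a b : ℂ) :
    lineInt γ δ 0 (a + b) = lineInt γ δ 0 a + lineInt γ δ 0 b := by
  rw [lineInt_zero_eq, lineInt_zero_eq, lineInt_zero_eq, brkt_add_right]; ring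

lemma lineInt_zero_real (γ δ q : ℂ) (r : ℝ) :
    lineInt γ δ 0 ((r:ℂ) * q) = (r:ℂ) * lineInt γ δ 0 q := by
  rw [lineInt_zero_eq, lineInt_zero_eq, brkt_real_right]; ring

lemma lineInt_smul_pair (α β p q : ℂ) (r : ℝ) :
    lineInt α β ((r:ℂ) * p) ((r:ℂ) * q) = (r:ℂ) * lineInt α β p q := by
  rw [lineInt, lineInt, brkt_real_right, brkt_real_right]; ring

lemma lineInt_add_pair (α β p p' q q' : ℂ) :
    lineInt α β (p + p') (q + q') = lineInt α β p q + lineInt α β p' q' := by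
  rw [lineInt, lineInt, lineInt, brkt_add_right, brkt_add_right]; ring

lemma lineInt_neg_left (α β p q : ℂ) : lineInt (-α) β p q = lineInt α β p q := by
  rw [lineInt, lineInt, brkt_neg_left, brkt_neg_left, brkt_neg_right]; ring

lemma lineInt_neg_right (α β p q : ℂ) : lineInt α (-β) p q = lineInt α β p q := by
  rw [lineInt, lineInt, brkt_neg_left, brkt_neg_right, brkt_neg_left]; ring

lemma brkt_ratio_conj (a b c d : ℂ) :
    (starRingEnd ℂ) (brkt a b / brkt c d) = brkt a b / brkt c d := by
  rw [map_div₀, brkt_conj, brkt_conj, neg_div_neg_eq]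

lemma real_point (δ m : ℂ) : ((lineInt 1 δ 0 m).re : ℂ) = lineInt 1 δ 0 m := by
  apply Complex.conj_eq_iff_re.mp
  rw [lineInt_zero_eq, map_mul, map_one, map_div₀, brkt_conj, brkt_conj, neg_div_neg_eq]

lemma keyC (γ δ m : ℂ) (h : brkt δ 1 ≠ 0) :
    lineInt γ δ 0 m = lineInt 1 δ 0 m * lineInt γ δ 0 1 := by
  rw [lineInt_zero_eq, lineInt_zero_eq, lineInt_zero_eq]
  rcases eq_or_ne (brkt δ γ) 0 with h0 | h0
  · simp [h0]
  · field_simp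

lemma lineInt_zero_par {γ δ : ℂ} (h : brkt δ γ ≠ 0) (t : ℝ) :
    lineInt γ δ 0 ((t:ℂ) * γ) = (t:ℂ) * γ := by
  rw [lineInt_zero_eq, brkt_real_right, mul_div_assoc, div_self h, mul_one]

lemma elem_real_mul (γ β : ℂ) : ∃ t : ℝ, lineInt γ β 0 1 = (t:ℂ) * γ := by
  refine ⟨(brkt β 1 / brkt β γ).re, ?_⟩
  have ht : ((brkt β 1 / brkt β γ).re : ℂ) = brkt β 1 / brkt β γ :=
    Complex.conj_eq_iff_re.mp (brkt_ratio_conj β 1 β γ)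
  rw [lineInt_zero_eq, ht]

lemma brkt_mul_of_conj {c : ℂ} (hc : (starRingEnd ℂ) c = c) (x y : ℂ) :
    brkt x (c * y) = c * brkt x y := by
  simp only [brkt, map_mul, hc]; ring

lemma brkt_ratio_mul (x y a b c d : ℂ) :
    brkt x (brkt a b / brkt c d * y) = brkt a b / brkt c d * brkt x y :=
  brkt_mul_of_conj (brkt_ratio_conj a b c d) x y

lemma keyB (γ α β ε : ℂ) (hβα : brkt β α ≠ 0) (hαγ : brkt α γ ≠ 0)
    (hεγ : brkt ε γ ≠ 0) (hε1 : brkt ε 1 ≠ 0) (hγ1 : brkt γ 1 ≠ 0) :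
    lineInt γ 1 0 (lineInt α β 0 1) =
      -(lineInt 1 ε 0 (lineInt γ α 0 1) *
        (lineInt 1 γ 0 (lineInt α β 0 1) * lineInt γ ε 0 1)) := by
  rw [lineInt_zero_eq α β, lineInt_zero_eq γ α]
  rw [lineInt_zero_eq γ 1, lineInt_zero_eq 1 ε, lineInt_zero_eq 1 γ, lineInt_zero_eq γ ε]
  rw [brkt_ratio_mul, brkt_ratio_mul, brkt_ratio_mul]
  rw [brkt_swap α 1, brkt_swap γ 1, brkt_swap α γ]
  field_simp

lemma lineInt_zero_eq' (α β p : ℂ) : lineInt α β p 0 = brkt α p / brkt α β * β := by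
  rw [lineInt, brkt_zero_right, zero_div, zero_mul, add_zero]

lemma lineInt_zero_fix {R γ δ : ℂ} (hR : (starRingEnd ℂ) R = R) (h : brkt δ γ ≠ 0) :
    lineInt γ δ 0 (R * γ) = R * γ := by
  rw [lineInt_zero_eq, brkt_mul_of_conj hR, mul_div_assoc, div_self h, mul_one]

lemma lineInt_of_proj {α β : ℂ} (R S : ℂ) (hR : (starRingEnd ℂ) R = R)
    (hS : (starRingEnd ℂ) S = S) (h : brkt α β ≠ 0) (h' : brkt β α ≠ 0) :
    lineInt α β (R * β) (S * α) = R * β + S * α := by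
  rw [lineInt, brkt_mul_of_conj hR, brkt_mul_of_conj hS, mul_div_assoc, mul_div_assoc,
    div_self h, div_self h', mul_one, mul_one]

lemma lineInt_zero_mulc {R : ℂ} (hR : (starRingEnd ℂ) R = R) (γ δ z : ℂ) :
    lineInt γ δ 0 (R * z) = R * lineInt γ δ 0 z := by
  rw [lineInt_zero_eq, lineInt_zero_eq, brkt_mul_of_conj hR]; ring

lemma subX {u v w : ℂ} (huv : brkt u v ≠ 0) (hvu : brkt v u ≠ 0)
    (hwu : brkt w u ≠ 0) (hwv : brkt w v ≠ 0) (x : ℂ) :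
    lineInt u v (lineInt v w 0 (lineInt v u 0 x)) (lineInt u w 0 (lineInt u v 0 x)) = x := by
  have hP := lineInt_zero_eq v u x
  have hQ := lineInt_zero_eq u v x
  have e1 : lineInt v w 0 (lineInt v u 0 x) = lineInt v u 0 x := by
    rw [hP]; exact lineInt_zero_fix (brkt_ratio_conj u x u v) hwv
  have e2 : lineInt u w 0 (lineInt u v 0 x) = lineInt u v 0 x := by
    rw [hQ]; exact lineInt_zero_fix (brkt_ratio_conj v x v u) hwu
  rw [e1, e2, hP, hQ,
    lineInt_of_proj _ _ (brkt_ratio_conj u x u v) (brkt_ratio_conj v x v u) huv hvu,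
    ← hP, ← hQ, ← lineInt_decomp, lineInt_self huv]

lemma subY {u v w : ℂ} (huv : brkt u v ≠ 0) (hvu : brkt v u ≠ 0) (huw : brkt u w ≠ 0)
    (hwu : brkt w u ≠ 0) (hvw : brkt v w ≠ 0) (hwv : brkt w v ≠ 0) (y : ℂ) :
    lineInt u v (lineInt v w (lineInt u w 0 (lineInt v u 0 y)) 0)
      (lineInt u w (lineInt v w 0 (lineInt u v 0 y)) 0) = -y := by
  have hA : lineInt u w 0 (lineInt v u 0 y)
      = brkt u y / brkt u v * (brkt w v / brkt w u * u) := by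
    rw [lineInt_zero_eq v u y, lineInt_zero_mulc (brkt_ratio_conj u y u v), lineInt_zero_eq u w v]
  have hD : lineInt v w (lineInt u w 0 (lineInt v u 0 y)) 0
      = brkt u y / brkt u v * (brkt w v / brkt w u * (brkt v u / brkt v w * w)) := by
    rw [hA, lineInt_zero_eq', brkt_mul_of_conj (brkt_ratio_conj u y u v),
      brkt_mul_of_conj (brkt_ratio_conj w v w u)]
    ring
  have hA2 : lineInt v w 0 (lineInt u v 0 y)
      = brkt v y / brkt v u * (brkt w u / brkt w v * v) := by
    rw [lineInt_zero_eq u v y, lineInt_zero_mulc (brkt_ratio_conj v y v u), lineInt_zero_eq v w u]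
  have hC : lineInt u w (lineInt v w 0 (lineInt u v 0 y)) 0
      = brkt v y / brkt v u * (brkt w u / brkt w v * (brkt u v / brkt u w * w)) := by
    rw [hA2, lineInt_zero_eq', brkt_mul_of_conj (brkt_ratio_conj v y v u),
      brkt_mul_of_conj (brkt_ratio_conj w u w v)]
    ring
  have hy : -y = -(brkt u y / brkt u v * v + brkt v y / brkt v u * u) := by
    rw [← lineInt_zero_eq v u y, ← lineInt_zero_eq u v y, ← lineInt_decomp, lineInt_self huv]
  have k1 : brkt w v / brkt w u * (brkt v u / brkt v w * brkt u w) = -brkt u v := by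
    rw [brkt_swap u v, brkt_swap u w, brkt_swap v w]
    rw [brkt_swap u v] at hvu
    rw [brkt_swap u w] at hwu
    rw [brkt_swap v w] at hwv
    field_simp
  have k2 : brkt w u / brkt w v * (brkt u v / brkt u w * brkt v w) = -brkt v u := by
    rw [brkt_swap u v, brkt_swap u w, brkt_swap v w]
    rw [brkt_swap u w] at hwu
    rw [brkt_swap v w] at hwv
    field_simp
  rw [hD, hC, lineInt,
    brkt_mul_of_conj (brkt_ratio_conj u y u v), brkt_mul_of_conj (brkt_ratio_conj w v w u),
    brkt_mul_of_conj (brkt_ratio_conj v u v w),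
    brkt_mul_of_conj (brkt_ratio_conj v y v u), brkt_mul_of_conj (brkt_ratio_conj w u w v),
    brkt_mul_of_conj (brkt_ratio_conj u v u w), k1, k2, hy]
  field_simp
  ring

lemma sub_identity {u v w : ℂ} (hu : ‖u‖ = 1) (hv : ‖v‖ = 1)
    (hw : ‖w‖ = 1) (huv : u ≠ v) (huv' : u ≠ -v) (huw : u ≠ w) (huw' : u ≠ -w)
    (hvw : v ≠ w) (hvw' : v ≠ -w) (x y : ℂ) :
    lineInt u v (lineInt v w (lineInt u w 0 (lineInt v u 0 y)) (lineInt v u 0 x))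
      (lineInt u w (lineInt v w 0 (lineInt u v 0 y)) (lineInt u v 0 x)) = x - y := by
  have huv0 : brkt u v ≠ 0 := brkt_ne_zero hu hv huv huv'
  have huw0 : brkt u w ≠ 0 := brkt_ne_zero hu hw huw huw'
  have hvw0 : brkt v w ≠ 0 := brkt_ne_zero hv hw hvw hvw'
  have hvu0 : brkt v u ≠ 0 := by rw [brkt_swap u v]; exact neg_ne_zero.mpr huv0
  have hwu0 : brkt w u ≠ 0 := by rw [brkt_swap u w]; exact neg_ne_zero.mpr huw0
  have hwv0 : brkt w v ≠ 0 := by rw [brkt_swap v w]; exact neg_ne_zero.mpr hvw0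
  have hsplitD : lineInt v w (lineInt u w 0 (lineInt v u 0 y)) (lineInt v u 0 x)
      = lineInt v w (lineInt u w 0 (lineInt v u 0 y)) 0 + lineInt v w 0 (lineInt v u 0 x) := by
    rw [← lineInt_add_pair, add_zero, zero_add]
  have hsplitC : lineInt u w (lineInt v w 0 (lineInt u v 0 y)) (lineInt u v 0 x)
      = lineInt u w (lineInt v w 0 (lineInt u v 0 y)) 0 + lineInt u w 0 (lineInt u v 0 x) := by
    rw [← lineInt_add_pair, add_zero, zero_add]
  rw [hsplitD, hsplitC, lineInt_add_pair,
    subY huv0 hvu0 huw0 hwu0 hvw0 hwv0 y, subX huv0 hvu0 hwu0 hwv0 x]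
  ring

section Ctx

variable {U : Set ℂ} {u v w : ℂ}

lemma neg_flip {a b : ℂ} (h : a = -b) : b = -a := by rw [h, neg_neg]

lemma zero_mem_RU : (0:ℂ) ∈ RU U := Set.mem_iUnion.mpr ⟨0, Or.inl rfl⟩

lemma one_mem_RU : (1:ℂ) ∈ RU U := Set.mem_iUnion.mpr ⟨0, Or.inr rfl⟩

lemma stepSet_mono (hU : ∀ z ∈ U, ‖z‖ = 1) (h1U : (1:ℂ) ∈ U) (hu : u ∈ U)
    (hu1 : u ≠ 1) (hu1' : u ≠ -1) {n : ℕ} : stepSet U n ⊆ stepSet U (n+1) := by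
  intro p hp
  have hb : brkt 1 u ≠ 0 :=
    brkt_ne_zero (by simp) (hU u hu) (Ne.symm hu1) (fun h => hu1' (neg_flip h))
  exact ⟨1, h1U, u, hu, Ne.symm hu1, fun h => hu1' (neg_flip h),
    p, hp, p, hp, (lineInt_self hb p).symm⟩

lemma stepSet_le (hU : ∀ z ∈ U, ‖z‖ = 1) (h1U : (1:ℂ) ∈ U) (hu : u ∈ U)
    (hu1 : u ≠ 1) (hu1' : u ≠ -1) {m n : ℕ} (h : m ≤ n) : stepSet U m ⊆ stepSet U n := by
  induction n with
  | zero => rw [Nat.le_zero.mp h]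
  | succ n ih =>
    rcases eq_or_lt_of_le h with rfl | hlt
    · exact fun _ h => h
    · exact fun x hx => stepSet_mono hU h1U hu hu1 hu1' (ih (Nat.lt_succ_iff.mp hlt) hx)

lemma RU_lineInt (hU : ∀ z ∈ U, ‖z‖ = 1) (h1U : (1:ℂ) ∈ U) (hu : u ∈ U)
    (hu1 : u ≠ 1) (hu1' : u ≠ -1) {α β p q : ℂ}
    (hα : α ∈ U) (hβ : β ∈ U) (h1 : α ≠ β) (h2 : α ≠ -β)
    (hp : p ∈ RU U) (hq : q ∈ RU U) : lineInt α β p q ∈ RU U := by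
  obtain ⟨n, hn⟩ := Set.mem_iUnion.mp hp
  obtain ⟨m, hm⟩ := Set.mem_iUnion.mp hq
  exact Set.mem_iUnion.mpr ⟨max n m + 1, α, hα, β, hβ, h1, h2,
    p, stepSet_le hU h1U hu hu1 hu1' (le_max_left n m) hn,
    q, stepSet_le hU h1U hu hu1 hu1' (le_max_right n m) hm, rfl⟩

lemma elem_mem_RU {z : ℂ} (hz : IsElem U z) : z ∈ RU U := by
  obtain ⟨α, hα, β, hβ, h1, h2, hzz⟩ := hz
  exact Set.mem_iUnion.mpr ⟨1, α, hα, β, hβ, h1, h2, 0, Or.inl rfl, 1, Or.inr rfl, hzz⟩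

lemma RU_smul (hU : ∀ z ∈ U, ‖z‖ = 1) (h1U : (1:ℂ) ∈ U) (hu : u ∈ U)
    (hu1 : u ≠ 1) (hu1' : u ≠ -1) (r : ℝ) (hr : (r:ℂ) ∈ RU U) {x : ℂ}
    (hx : x ∈ RU U) : (r:ℂ) * x ∈ RU U := by
  obtain ⟨n, hn⟩ := Set.mem_iUnion.mp hx
  clear hx
  induction n generalizing x with
  | zero =>
    rcases hn with rfl | rfl
    · rw [mul_zero]; exact zero_mem_RU
    · rw [mul_one]; exact hr
  | succ n ih =>
    obtain ⟨α, hα, β, hβ, h1, h2, p, hp, q, hq, rfl⟩ := hn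
    rw [← lineInt_smul_pair]
    exact RU_lineInt hU h1U hu hu1 hu1' hα hβ h1 h2 (ih hp) (ih hq)

lemma RU_sub (hU : ∀ z ∈ U, ‖z‖ = 1) (h1U : (1:ℂ) ∈ U)
    (hu : u ∈ U) (hv : v ∈ U) (hw : w ∈ U)
    (hu1 : u ≠ 1) (hu1' : u ≠ -1)
    (huv : u ≠ v) (huv' : u ≠ -v) (huw : u ≠ w) (huw' : u ≠ -w)
    (hvw : v ≠ w) (hvw' : v ≠ -w) {x y : ℂ}
    (hx : x ∈ RU U) (hy : y ∈ RU U) : x - y ∈ RU U := by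
  rw [← sub_identity (hU u hu) (hU v hv) (hU w hw) huv huv' huw huw' hvw hvw' x y]
  have hvu : v ≠ u := Ne.symm huv
  have hvu' : v ≠ -u := fun h => huv' (neg_flip h)
  have L : ∀ {α β p q : ℂ}, α ∈ U → β ∈ U → α ≠ β → α ≠ -β → p ∈ RU U → q ∈ RU U →
      lineInt α β p q ∈ RU U :=
    fun hα hβ h1 h2 hp hq => RU_lineInt hU h1U hu hu1 hu1' hα hβ h1 h2 hp hq
  exact L hu hv huv huv'
    (L hv hw hvw hvw'
      (L hu hw huw huw' zero_mem_RU (L hv hu hvu hvu' zero_mem_RU hy))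
      (L hv hu hvu hvu' zero_mem_RU hx))
    (L hu hw huw huw'
      (L hv hw hvw hvw' zero_mem_RU (L hu hv huv huv' zero_mem_RU hy))
      (L hu hv huv huv' zero_mem_RU hx))

lemma RU_add (hU : ∀ z ∈ U, ‖z‖ = 1) (h1U : (1:ℂ) ∈ U)
    (hu : u ∈ U) (hv : v ∈ U) (hw : w ∈ U)
    (hu1 : u ≠ 1) (hu1' : u ≠ -1)
    (huv : u ≠ v) (huv' : u ≠ -v) (huw : u ≠ w) (huw' : u ≠ -w)
    (hvw : v ≠ w) (hvw' : v ≠ -w) {x y : ℂ}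
    (hx : x ∈ RU U) (hy : y ∈ RU U) : x + y ∈ RU U := by
  have h := RU_sub hU h1U hu hv hw hu1 hu1' huv huv' huw huw' hvw hvw' hx
    (RU_sub hU h1U hu hv hw hu1 hu1' huv huv' huw huw' hvw hvw' zero_mem_RU hy)
  rwa [zero_sub, sub_neg_eq_add] at h

lemma RU_coef (hU : ∀ z ∈ U, ‖z‖ = 1) (h1U : (1:ℂ) ∈ U)
    (hu : u ∈ U) (hv : v ∈ U) (hw : w ∈ U)
    (hu1 : u ≠ 1) (hu1' : u ≠ -1)
    (huv : u ≠ v) (huv' : u ≠ -v) (huw : u ≠ w) (huw' : u ≠ -w)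
    (hvw : v ≠ w) (hvw' : v ≠ -w) {c : ℝ}
    (hc : c ∈ Subring.closure (projSet U)) : ((c:ℝ):ℂ) ∈ RU U := by
  induction hc using Subring.closure_induction with
  | mem x hx =>
    obtain ⟨γ, hγ, δ, hδ, h1, h2, z, hz, hr⟩ := hx
    rw [hr]
    exact RU_lineInt hU h1U hu hu1 hu1' hγ hδ h1 h2 zero_mem_RU (elem_mem_RU hz)
  | zero => push_cast; exact zero_mem_RU
  | one => push_cast; exact one_mem_RU
  | add a b ha hb iha ihb =>
    push_cast; exact RU_add hU h1U hu hv hw hu1 hu1' huv huv' huw huw' hvw hvw' iha ihb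
  | neg a ha iha =>
    push_cast
    have h := RU_sub hU h1U hu hv hw hu1 hu1' huv huv' huw huw' hvw hvw' zero_mem_RU iha
    rwa [zero_sub] at h
  | mul a b ha hb iha ihb =>
    push_cast; exact RU_smul hU h1U hu hu1 hu1' a iha ihb

end Ctx

section ZP

variable {U : Set ℂ} {u v w : ℂ}

lemma zp_zero : IsZPComb U 0 :=
  ⟨0, Fin.elim0, Fin.elim0, fun i => i.elim0, fun i => i.elim0, by simp⟩

lemma zp_single {c : ℝ} {z : ℂ} (hc : c ∈ Subring.closure (projSet U)) (hz : IsElem U z) :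
    IsZPComb U ((c:ℂ) * z) :=
  ⟨1, fun _ => c, fun _ => z, fun _ => hc, fun _ => hz, by simp⟩

lemma zp_add {m1 m2 : ℂ} (h1 : IsZPComb U m1) (h2 : IsZPComb U m2) :
    IsZPComb U (m1 + m2) := by
  obtain ⟨n1, c1, z1, hc1, hz1, rfl⟩ := h1
  obtain ⟨n2, c2, z2, hc2, hz2, rfl⟩ := h2
  refine ⟨n1 + n2, Fin.append c1 c2, Fin.append z1 z2, ?_, ?_, ?_⟩
  · intro i
    refine Fin.addCases (fun j => ?_) (fun j => ?_) i
    · rw [Fin.append_left]; exact hc1 j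
    · rw [Fin.append_right]; exact hc2 j
  · intro i
    refine Fin.addCases (fun j => ?_) (fun j => ?_) i
    · rw [Fin.append_left]; exact hz1 j
    · rw [Fin.append_right]; exact hz2 j
  · rw [Fin.sum_univ_add]
    simp only [Fin.append_left, Fin.append_right]

lemma zp_smul {r : ℝ} {m : ℂ} (hr : r ∈ Subring.closure (projSet U))
    (h : IsZPComb U m) : IsZPComb U ((r:ℂ) * m) := by
  obtain ⟨n, c, z, hc, hz, rfl⟩ := h
  refine ⟨n, fun i => r * c i, z, fun i => mul_mem hr (hc i), hz, ?_⟩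
  rw [Finset.mul_sum]
  apply Finset.sum_congr rfl
  intro i _
  push_cast
  ring

lemma zp_sum {ι : Type*} (s : Finset ι) (f : ι → ℂ)
    (h : ∀ i ∈ s, IsZPComb U (f i)) : IsZPComb U (∑ i ∈ s, f i) :=
  Finset.sum_induction f _ (fun _ _ ha hb => zp_add ha hb) zp_zero h

lemma lineInt_zero_sum {ι : Type*} (γ δ : ℂ) (s : Finset ι) (f : ι → ℂ) :
    lineInt γ δ 0 (∑ i ∈ s, f i) = ∑ i ∈ s, lineInt γ δ 0 (f i) := by
  classical
  induction s using Finset.induction with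
  | empty => simp [lineInt_zero_zero]
  | insert _ _ hnotmem ih =>
    rw [Finset.sum_insert hnotmem, Finset.sum_insert hnotmem, lineInt_zero_add, ih]

lemma zp_elem (hU : ∀ z ∈ U, ‖z‖ = 1) (h1U : (1:ℂ) ∈ U)
    (hu : u ∈ U) (hv : v ∈ U)
    (hu1 : u ≠ 1) (hu1' : u ≠ -1) (hv1 : v ≠ 1) (hv1' : v ≠ -1)
    (huv : u ≠ v) (huv' : u ≠ -v)
    {γ δ z : ℂ} (hγU : γ ∈ U) (hδU : δ ∈ U) (h1 : γ ≠ δ) (h2 : γ ≠ -δ)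
    (hz : IsElem U z) : IsZPComb U (lineInt γ δ 0 z) := by
  by_cases hδ1 : δ = 1 ∨ δ = -1
  · -- δ = ±1, so γ ≠ ±1
    have hγ1 : γ ≠ 1 := by
      rcases hδ1 with rfl | rfl
      · exact h1
      · simpa using h2
    have hγ1' : γ ≠ -1 := by
      rcases hδ1 with rfl | rfl
      · exact h2
      · exact h1
    have hred : lineInt γ δ 0 z = lineInt γ 1 0 z := by
      rcases hδ1 with rfl | rfl
      · rfl
      · exact lineInt_neg_right γ 1 0 z
    rw [hred]
    obtain ⟨ε, hεU, hε1, hε1', hεγ, hεγ'⟩ :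
        ∃ ε, ε ∈ U ∧ ε ≠ 1 ∧ ε ≠ -1 ∧ ε ≠ γ ∧ ε ≠ -γ := by
      by_cases hc : u = γ ∨ u = -γ
      · refine ⟨v, hv, hv1, hv1', ?_, ?_⟩
        · intro h
          rcases hc with h' | h'
          · exact huv (h'.trans h.symm)
          · exact huv' (by rw [h', h])
        · intro h
          rcases hc with h' | h'
          · exact huv' (by rw [h', h, neg_neg])
          · exact huv (by rw [h', ← h])
      · push_neg at hc
        exact ⟨u, hu, hu1, hu1', hc.1, hc.2⟩
    have hbε1 : brkt ε 1 ≠ 0 := brkt_ne_zero (hU ε hεU) (by simp) hε1 hε1'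
    have hbεγ : brkt ε γ ≠ 0 := brkt_ne_zero (hU ε hεU) (hU γ hγU) hεγ hεγ'
    have hbγ1 : brkt γ 1 ≠ 0 := brkt_ne_zero (hU γ hγU) (by simp) hγ1 hγ1'
    have hb1γ : brkt 1 γ ≠ 0 := by rw [brkt_swap γ 1]; exact neg_ne_zero.mpr hbγ1
    have hεelem : IsElem U (lineInt γ ε 0 1) :=
      ⟨γ, hγU, ε, hεU, Ne.symm hεγ, fun h => hεγ' (neg_flip h), rfl⟩
    obtain ⟨α, hαU, β, hβU, hαβ, hαβ', hzeq⟩ := hz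
    by_cases hαγ : α = γ ∨ α = -γ
    · -- z is parallel to γ
      have hz' : ∃ t : ℝ, z = (t:ℂ) * γ := by
        rcases hαγ with h' | h'
        · obtain ⟨t, ht⟩ := elem_real_mul γ β
          exact ⟨t, by rw [hzeq, h', ht]⟩
        · obtain ⟨t, ht⟩ := elem_real_mul γ β
          exact ⟨t, by rw [hzeq, h', lineInt_neg_left, ht]⟩
      obtain ⟨t, rfl⟩ := hz'
      rw [lineInt_zero_par hb1γ t, ← lineInt_zero_par hbεγ t, keyC γ ε _ hbε1]
      have hts : (((lineInt 1 ε 0 ((t:ℂ) * γ)).re : ℝ) : ℂ) = lineInt 1 ε 0 ((t:ℂ) * γ) :=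
        real_point ε _
      have hsP : (lineInt 1 ε 0 ((t:ℂ) * γ)).re ∈ projSet U :=
        ⟨1, h1U, ε, hεU, Ne.symm hε1, fun h => hε1' (neg_flip h),
          (t:ℂ) * γ, ⟨α, hαU, β, hβU, hαβ, hαβ', hzeq⟩, hts⟩
      rw [← hts]
      exact zp_single (Subring.subset_closure hsP) hεelem
    · push_neg at hαγ
      have hbβα : brkt β α ≠ 0 :=
        brkt_ne_zero (hU β hβU) (hU α hαU) (Ne.symm hαβ) (fun h => hαβ' (neg_flip h))
      have hbαγ : brkt α γ ≠ 0 := brkt_ne_zero (hU α hαU) (hU γ hγU) hαγ.1 hαγ.2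
      rw [hzeq, keyB γ α β ε hbβα hbαγ hbεγ hbε1 hbγ1]
      have ht1 : (((lineInt 1 ε 0 (lineInt γ α 0 1)).re : ℝ) : ℂ)
          = lineInt 1 ε 0 (lineInt γ α 0 1) := real_point ε _
      have ht2 : (((lineInt 1 γ 0 (lineInt α β 0 1)).re : ℝ) : ℂ)
          = lineInt 1 γ 0 (lineInt α β 0 1) := real_point γ _
      have h1P : (lineInt 1 ε 0 (lineInt γ α 0 1)).re ∈ projSet U :=
        ⟨1, h1U, ε, hεU, Ne.symm hε1, fun h => hε1' (neg_flip h),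
          lineInt γ α 0 1,
          ⟨γ, hγU, α, hαU, Ne.symm hαγ.1, fun h => hαγ.2 (neg_flip h), rfl⟩, ht1⟩
      have h2P : (lineInt 1 γ 0 (lineInt α β 0 1)).re ∈ projSet U :=
        ⟨1, h1U, γ, hγU, Ne.symm hγ1, fun h => hγ1' (neg_flip h),
          lineInt α β 0 1, ⟨α, hαU, β, hβU, hαβ, hαβ', rfl⟩, ht2⟩
      have hval : -(lineInt 1 ε 0 (lineInt γ α 0 1) *
            (lineInt 1 γ 0 (lineInt α β 0 1) * lineInt γ ε 0 1))
          = (((-((lineInt 1 ε 0 (lineInt γ α 0 1)).re *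
              (lineInt 1 γ 0 (lineInt α β 0 1)).re) : ℝ)) : ℂ) * lineInt γ ε 0 1 := by
        push_cast
        rw [ht1, ht2]; ring
      rw [hval]
      exact zp_single (neg_mem (mul_mem (Subring.subset_closure h1P)
        (Subring.subset_closure h2P))) hεelem
  · -- δ ≠ ±1 : the generic case
    push_neg at hδ1
    have hbδ1 : brkt δ 1 ≠ 0 := brkt_ne_zero (hU δ hδU) (by simp) hδ1.1 hδ1.2
    rw [keyC γ δ z hbδ1]
    have ht : (((lineInt 1 δ 0 z).re : ℝ) : ℂ) = lineInt 1 δ 0 z := real_point δ z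
    have htP : (lineInt 1 δ 0 z).re ∈ projSet U :=
      ⟨1, h1U, δ, hδU, Ne.symm hδ1.1, fun h => hδ1.2 (neg_flip h), z, hz, ht⟩
    rw [← ht]
    exact zp_single (Subring.subset_closure htP) ⟨γ, hγU, δ, hδU, h1, h2, rfl⟩

lemma zp_lineInt (hU : ∀ z ∈ U, ‖z‖ = 1) (h1U : (1:ℂ) ∈ U)
    (hu : u ∈ U) (hv : v ∈ U)
    (hu1 : u ≠ 1) (hu1' : u ≠ -1) (hv1 : v ≠ 1) (hv1' : v ≠ -1)
    (huv : u ≠ v) (huv' : u ≠ -v)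
    {γ δ m : ℂ} (hγU : γ ∈ U) (hδU : δ ∈ U) (h1 : γ ≠ δ) (h2 : γ ≠ -δ)
    (hm : IsZPComb U m) : IsZPComb U (lineInt γ δ 0 m) := by
  obtain ⟨n, c, z, hc, hz, rfl⟩ := hm
  rw [lineInt_zero_sum]
  simp only [lineInt_zero_real]
  exact zp_sum _ _ (fun i _ => zp_smul (hc i)
    (zp_elem hU h1U hu hv hu1 hu1' hv1 hv1' huv huv' hγU hδU h1 h2 (hz i)))

lemma zp_one (hU : ∀ z ∈ U, ‖z‖ = 1) (h1U : (1:ℂ) ∈ U) (hu : u ∈ U)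
    (hu1 : u ≠ 1) (hu1' : u ≠ -1) : IsZPComb U 1 := by
  have hbu1 : brkt u 1 ≠ 0 := brkt_ne_zero (hU u hu) (by simp) hu1 hu1'
  have h : lineInt 1 u 0 1 = 1 := by
    rw [lineInt_zero_eq, div_self hbu1, one_mul]
  have : (1:ℂ) = ((1:ℝ):ℂ) * lineInt 1 u 0 1 := by rw [h]; norm_num
  rw [this]
  exact zp_single (one_mem _)
    ⟨1, h1U, u, hu, Ne.symm hu1, fun hh => hu1' (neg_flip hh), rfl⟩

end ZP

/-- if `1 ∈ U` and `U` contains `u, v, w` with `1, u, v, w` pairwise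
non-±-equal, then `R(U)` is exactly the set of `ℤ[P]`-linear combinations of
elementary monomials. -/
theorem stmt12 (U : Set ℂ) (hU : ∀ z ∈ U, ‖z‖ = 1) (h1U : (1 : ℂ) ∈ U)
    (u v w : ℂ) (hu : u ∈ U) (hv : v ∈ U) (hw : w ∈ U)
    (hu1 : u ≠ 1) (hu1' : u ≠ -1) (hv1 : v ≠ 1) (hv1' : v ≠ -1)
    (hw1 : w ≠ 1) (hw1' : w ≠ -1)
    (huv : u ≠ v) (huv' : u ≠ -v) (huw : u ≠ w) (huw' : u ≠ -w)
    (hvw : v ≠ w) (hvw' : v ≠ -w) :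
    RU U = {m | IsZPComb U m} := by
  ext m
  simp only [Set.mem_setOf_eq]
  constructor
  · intro hm
    obtain ⟨n, hn⟩ := Set.mem_iUnion.mp hm
    clear hm
    induction n generalizing m with
    | zero =>
      rcases hn with rfl | rfl
      · exact zp_zero
      · exact zp_one hU h1U hu hu1 hu1'
    | succ n ih =>
      obtain ⟨α, hα, β, hβ, h1, h2, p, hp, q, hq, rfl⟩ := hn
      rw [lineInt_decomp]
      exact zp_add
        (zp_lineInt hU h1U hu hv hu1 hu1' hv1 hv1' huv huv' hβ hα (Ne.symm h1)
          (fun h => h2 (neg_flip h)) (ih p hp))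
        (zp_lineInt hU h1U hu hv hu1 hu1' hv1 hv1' huv huv' hα hβ h1 h2 (ih q hq))
  · intro hm
    obtain ⟨n, c, z, hc, hz, rfl⟩ := hm
    exact Finset.sum_induction _ _
      (fun a b ha hb => RU_add hU h1U hu hv hw hu1 hu1' huv huv' huw huw' hvw hvw' ha hb)
      zero_mem_RU
      (fun i _ => RU_smul hU h1U hu hu1 hu1' (c i)
        (RU_coef hU h1U hu hv hw hu1 hu1' huv huv' huw huw' hvw hvw' (hc i))
        (elem_mem_RU (hz i)))
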